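/- Let A, B be bounded Hermitian operators. Then for all t ≥ 0: ‖[A,[A, e^{-it(A+B)}]]‖ ≤ t‖[A,[A,B]]‖ + 2t²‖A‖²‖(A+B)²‖ in operator norm. -/

import Mathlib

set_option maxHeartbeats 1000000


open Complex

/-- `‖[A,[A, e^{-it(A+B)}]]‖ ≤ t‖[A,[A,B]]‖ + 2t²‖A‖²‖(A+B)²‖` for all `t ≥ 0`. -/
theorem stmt11 {E : Type*} [NormedAddCommGroup E] [InnerProductSpace ℂ E] [CompleteSpace E]
    (A B : E →L[ℂ] E) (hA : IsSelfAdjoint A) (hB : IsSelfAdjoint B)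
    (t : ℝ) (ht : 0 ≤ t) :
    ‖A * (A * NormedSpace.exp ((-(Complex.I * t)) • (A + B))
            - NormedSpace.exp ((-(Complex.I * t)) • (A + B)) * A)
        - (A * NormedSpace.exp ((-(Complex.I * t)) • (A + B))
            - NormedSpace.exp ((-(Complex.I * t)) • (A + B)) * A) * A‖
      ≤ t * ‖A * (A * B - B * A) - (A * B - B * A) * A‖
          + 2 * t ^ 2 * ‖A‖ ^ 2 * ‖(A + B) * (A + B)‖ := by
  rcases subsingleton_or_nontrivial E with hE | hE
  · have hss : Subsingleton (E →L[ℂ] E) := inferInstance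
    rw [Subsingleton.elim (A * (A * NormedSpace.exp ((-(Complex.I * t)) • (A + B))
            - NormedSpace.exp ((-(Complex.I * t)) • (A + B)) * A)
        - (A * NormedSpace.exp ((-(Complex.I * t)) • (A + B))
            - NormedSpace.exp ((-(Complex.I * t)) • (A + B)) * A) * A) 0, norm_zero]
    positivity
  · set H : E →L[ℂ] E := A + B with hHdef
    set c : ℂ := -(Complex.I * t) with hc
    set X : E →L[ℂ] E := c • H with hXdef
    have hHsa : IsSelfAdjoint H := hA.add hB
    have hnc : ‖c‖ = t := by
      rw [hc, norm_neg, norm_mul, Complex.norm_I, one_mul, Complex.norm_real,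
        Real.norm_eq_abs, _root_.abs_of_nonneg ht]
    -- unitarity
    have hunit : ∀ s : ℝ, ‖NormedSpace.exp (s • X)‖ = 1 := by
      intro s
      have ha : IsSelfAdjoint ((-(s * t) : ℝ) • H) :=
        IsSelfAdjoint.smul (star_trivial _) hHsa
      have hsx : s • X = Complex.I • ((-(s * t) : ℝ) • H) := by
        rw [hXdef, ← IsScalarTower.algebraMap_smul ℂ s (c • H),
          ← IsScalarTower.algebraMap_smul ℂ (-(s * t) : ℝ) H, smul_smul, smul_smul]
        congr 1
        simp only [Complex.coe_algebraMap, hc]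
        push_cast
        ring
      rw [hsx]
      exact CStarRing.norm_coe_unitary (selfAdjoint.expUnitary ⟨_, ha⟩)
    -- derivative
    have hφ : ∀ s : ℝ, HasDerivAt (fun u : ℝ => NormedSpace.exp (u • X))
        (NormedSpace.exp (s • X) * X) s := by
      intro s
      have h := hasDerivAt_exp_smul_const (𝕂 := ℝ) X s
      simpa using h
    have hcont : Continuous fun s : ℝ => NormedSpace.exp (s • X) :=
      continuous_iff_continuousAt.mpr fun s => (hφ s).continuousAt
    set K : ℝ := t ^ 2 * ‖H * H‖ with hK
    have hKnn : 0 ≤ K := by positivity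
    have hXX : ‖X * X‖ = K := by
      rw [hXdef, smul_mul_assoc, mul_smul_comm, smul_smul, norm_smul, norm_mul, hnc, hK]
      ring
    have hbound : ∀ s : ℝ, ‖NormedSpace.exp (s • X) * X * X‖ ≤ K := by
      intro s
      calc ‖NormedSpace.exp (s • X) * X * X‖ = ‖NormedSpace.exp (s • X) * (X * X)‖ := by
            rw [mul_assoc]
        _ ≤ ‖NormedSpace.exp (s • X)‖ * ‖X * X‖ := norm_mul_le _ _
        _ = K := by rw [hunit, hXX, one_mul]
    -- first order: ‖exp(s•X)*X - X‖ ≤ s * K on [0,1]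
    have hstep1 : ∀ s : ℝ, 0 ≤ s → ‖NormedSpace.exp (s • X) * X - X‖ ≤ s * K := by
      intro s hs
      have hft : (∫ r in (0:ℝ)..s, NormedSpace.exp (r • X) * X * X)
          = NormedSpace.exp (s • X) * X - NormedSpace.exp ((0:ℝ) • X) * X := by
        apply intervalIntegral.integral_eq_sub_of_hasDerivAt
        · exact fun r _ => (hφ r).mul_const X
        · exact (((hcont.mul continuous_const).mul continuous_const).intervalIntegrable _ _)
      have h0 : NormedSpace.exp ((0:ℝ) • X) * X = X := by
        simp [NormedSpace.exp_zero]
      rw [h0] at hft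
      rw [← hft]
      calc ‖∫ r in (0:ℝ)..s, NormedSpace.exp (r • X) * X * X‖ ≤ K * |s - 0| :=
            intervalIntegral.norm_integral_le_of_norm_le_const fun r _ => hbound r
        _ = s * K := by rw [sub_zero, _root_.abs_of_nonneg hs]; ring
    -- second order
    have hR : ‖NormedSpace.exp X - 1 - X‖ ≤ K / 2 := by
      have hft : (∫ s in (0:ℝ)..1, (NormedSpace.exp (s • X) * X - X))
          = (NormedSpace.exp ((1:ℝ) • X) - (1:ℝ) • X)
            - (NormedSpace.exp ((0:ℝ) • X) - (0:ℝ) • X) := by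
        refine intervalIntegral.integral_eq_sub_of_hasDerivAt
          (f := fun u : ℝ => NormedSpace.exp (u • X) - u • X) ?_ ?_
        · intro s _
          have h1 : HasDerivAt (fun u : ℝ => u • X) ((1:ℝ) • X) s :=
            (hasDerivAt_id s).smul_const X
          have h2 := (hφ s).sub h1
          rw [one_smul] at h2
          exact h2
        · exact (((hcont.mul continuous_const).sub continuous_const).intervalIntegrable _ _)
      have hid : (NormedSpace.exp ((1:ℝ) • X) - (1:ℝ) • X)
            - (NormedSpace.exp ((0:ℝ) • X) - (0:ℝ) • X)
          = NormedSpace.exp X - 1 - X := by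
        simp [NormedSpace.exp_zero]
        abel
      rw [hid] at hft
      rw [← hft]
      have hb : ‖∫ s in (0:ℝ)..1, (NormedSpace.exp (s • X) * X - X)‖
          ≤ |∫ s in (0:ℝ)..1, s * K| := by
        apply intervalIntegral.norm_integral_le_abs_of_norm_le
        · filter_upwards [MeasureTheory.ae_restrict_mem measurableSet_uIoc] with s hs
          have hs0 : 0 ≤ s := by
            rcases Set.mem_uIoc.mp hs with h | h
            · exact le_of_lt h.1
            · exfalso; linarith [h.1, h.2]
          exact hstep1 s hs0
        · exact (continuous_id.mul continuous_const).intervalIntegrable _ _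
      have hval : (∫ s in (0:ℝ)..1, s * K) = K / 2 := by
        rw [intervalIntegral.integral_mul_const, integral_id]
        ring
      rw [hval, _root_.abs_of_nonneg (by positivity : (0:ℝ) ≤ K / 2)] at hb
      exact hb
    -- double commutator part
    have hcomm_norm : ∀ M N : E →L[ℂ] E, ‖M * N - N * M‖ ≤ 2 * ‖M‖ * ‖N‖ := by
      intro M N
      calc ‖M * N - N * M‖ ≤ ‖M * N‖ + ‖N * M‖ := norm_sub_le _ _
        _ ≤ ‖M‖ * ‖N‖ + ‖N‖ * ‖M‖ := add_le_add (norm_mul_le _ _) (norm_mul_le _ _)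
        _ = 2 * ‖M‖ * ‖N‖ := by ring
    set U : E →L[ℂ] E := NormedSpace.exp X with hU
    set R : E →L[ℂ] E := U - 1 - X with hRdef
    have hRnorm : ‖R‖ ≤ K / 2 := hR
    have hsplit : A * (A * U - U * A) - (A * U - U * A) * A
        = c • (A * (A * B - B * A) - (A * B - B * A) * A)
          + (A * (A * R - R * A) - (A * R - R * A) * A) := by
      have hU' : U = R + 1 + X := by rw [hRdef]; abel
      rw [hU', hXdef, hHdef]
      simp only [smul_add, smul_sub, mul_add, add_mul, mul_sub, sub_mul, mul_one, one_mul,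
        mul_smul_comm, smul_mul_assoc, mul_assoc]
      abel
    rw [hsplit]
    have hrem : ‖A * (A * R - R * A) - (A * R - R * A) * A‖
        ≤ 2 * ‖A‖ * (2 * ‖A‖ * (K / 2)) := by
      calc ‖A * (A * R - R * A) - (A * R - R * A) * A‖
          ≤ 2 * ‖A‖ * ‖A * R - R * A‖ := hcomm_norm A _
        _ ≤ 2 * ‖A‖ * (2 * ‖A‖ * (K / 2)) := by
            apply mul_le_mul_of_nonneg_left _ (by positivity)
            calc ‖A * R - R * A‖ ≤ 2 * ‖A‖ * ‖R‖ := hcomm_norm A R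
              _ ≤ 2 * ‖A‖ * (K / 2) := mul_le_mul_of_nonneg_left hRnorm (by positivity)
    calc ‖c • (A * (A * B - B * A) - (A * B - B * A) * A)
            + (A * (A * R - R * A) - (A * R - R * A) * A)‖
        ≤ ‖c • (A * (A * B - B * A) - (A * B - B * A) * A)‖
            + ‖A * (A * R - R * A) - (A * R - R * A) * A‖ := norm_add_le _ _
      _ ≤ t * ‖A * (A * B - B * A) - (A * B - B * A) * A‖
            + 2 * ‖A‖ * (2 * ‖A‖ * (K / 2)) := by
          rw [norm_smul, hnc]; exact add_le_add le_rfl hrem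
      _ = t * ‖A * (A * B - B * A) - (A * B - B * A) * A‖
            + 2 * t ^ 2 * ‖A‖ ^ 2 * ‖H * H‖ := by rw [hK]; ring
      _ = t * ‖A * (A * B - B * A) - (A * B - B * A) * A‖
            + 2 * t ^ 2 * ‖A‖ ^ 2 * ‖(A + B) * (A + B)‖ := by rw [hHdef]
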